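/- Fix a real ρ > 0 and an integer n ≥ 2. Define the ring freshness values by F(n) = 1/(1+ρ) and F(j) = (j/n + F(j+1)) / (1 + ρ + j/n) for j = 1, …, n−1. Then F(1) ≤ (1+ρ)/(ρ²·n) + (1+ρ)^{-n}. -/

import Mathlib

/-- Upper bound on the single-node ring-network freshness: with
`F n = 1/(1+ρ)` and `F j = (j/n + F (j+1))/(1+ρ+j/n)` for `1 ≤ j ≤ n-1`,
one has `F 1 ≤ (1+ρ)/(ρ² n) + (1+ρ)^{-n}`. -/
theorem ring_freshness_upper_bound
    (ρ : ℝ) (hρ : 0 < ρ) (n : ℕ) (hn : 2 ≤ n)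
    (F : ℕ → ℝ)
    (hFn : F n = 1 / (1 + ρ))
    (hFrec : ∀ j : ℕ, 1 ≤ j → j ≤ n - 1 →
      F j = ((j : ℝ) / n + F (j + 1)) / (1 + ρ + (j : ℝ) / n)) :
    F 1 ≤ (1 + ρ) / (ρ ^ 2 * n) + (1 + ρ) ^ (-(n : ℤ)) := by
  have h1ρ : (0:ℝ) < 1 + ρ := by linarith
  set x : ℝ := (1 + ρ)⁻¹ with hxdef
  have hx0 : 0 < x := inv_pos.mpr h1ρ
  have hx1 : x < 1 := by
    rw [hxdef, inv_lt_one_iff₀]; right; linarith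
  have hnR : (0:ℝ) < n := by exact_mod_cast Nat.lt_of_lt_of_le (by norm_num) hn
  have key : ∀ d : ℕ, d ≤ n - 1 →
      0 ≤ F (n - d) ∧ F (n - d) ≤
        (∑ k ∈ Finset.range d, ((n - d + k : ℕ) : ℝ)/n * x^(k+1)) + x^(d+1) := by
    intro d
    induction d with
    | zero =>
      intro _
      simp only [Nat.sub_zero, Finset.range_zero, Finset.sum_empty, zero_add, pow_one]
      rw [hFn, one_div]
      exact ⟨by positivity, le_refl _⟩
    | succ d ih =>
      intro hd
      have hdn : d + 1 ≤ n - 1 := hd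
      have hdn' : d + 1 ≤ n := le_trans hdn (Nat.sub_le n 1)
      have hdn2 : d ≤ n := by omega
      obtain ⟨ih0, ih1⟩ := ih (le_trans (Nat.le_succ d) hd)
      set j := n - (d + 1) with hj
      have hj1 : 1 ≤ j := by omega
      have hjn : j ≤ n - 1 := by omega
      have hjsucc : j + 1 = n - d := by omega
      have hrec := hFrec j hj1 hjn
      have hjR : (0:ℝ) < j := by exact_mod_cast hj1
      have hnum : 0 ≤ (j:ℝ)/n + F (j+1) := by
        rw [hjsucc]; have := div_nonneg hjR.le hnR.le; linarith
      have hden : (0:ℝ) < 1 + ρ + (j:ℝ)/n := by positivity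
      constructor
      · rw [hrec]; exact div_nonneg hnum hden.le
      · have hstep : F j ≤ ((j:ℝ)/n + F (j+1)) * x := by
          rw [hrec, hxdef, ← div_eq_mul_inv]
          apply div_le_div_of_nonneg_left hnum h1ρ
          have : (0:ℝ) ≤ (j:ℝ)/n := by positivity
          linarith
        have hFb : F (j+1) ≤ (∑ k ∈ Finset.range d, ((n - d + k : ℕ) : ℝ)/n * x^(k+1)) + x^(d+1) := by
          rw [hjsucc]; exact ih1
        have hsum : (∑ k ∈ Finset.range d, (((n:ℝ) - d) + k)/n * x^(k+1)) * x
            = ∑ k ∈ Finset.range d, (((n:ℝ) - (d+1)) + (k+1))/n * x^(k+1+1) := by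
          rw [Finset.sum_mul]
          exact Finset.sum_congr rfl (fun k _ => by ring)
        calc F j ≤ ((j:ℝ)/n + F (j+1)) * x := hstep
          _ ≤ ((j:ℝ)/n + ((∑ k ∈ Finset.range d, ((n - d + k : ℕ) : ℝ)/n * x^(k+1)) + x^(d+1))) * x := by
              apply mul_le_mul_of_nonneg_right _ hx0.le
              linarith
          _ = (∑ k ∈ Finset.range (d+1), ((n - (d+1) + k : ℕ) : ℝ)/n * x^(k+1)) + x^(d+1+1) := by
              simp only [hj]
              rw [Finset.sum_range_succ']
              push_cast [Nat.cast_sub hdn', Nat.cast_sub hdn2] at hsum ⊢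
              linear_combination hsum
  -- apply with d = n - 1
  have hkey := key (n - 1) (le_refl _)
  have h1 : n - (n - 1) = 1 := by omega
  have h2 : n - 1 + 1 = n := by omega
  rw [h1, h2] at hkey
  obtain ⟨-, hF1⟩ := hkey
  -- bound the sum by the infinite series
  have hxnorm : ‖x‖ < 1 := by rw [Real.norm_eq_abs, abs_of_pos hx0]; exact hx1
  have hgeom := hasSum_coe_mul_geometric_of_norm_lt_one (r := x) hxnorm
  have hsum_le : (∑ k ∈ Finset.range (n-1), ((1 + k : ℕ) : ℝ)/n * x^(k+1)) ≤ (x / (1-x)^2) / n := by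
    have hmain : (∑ k ∈ Finset.range (n-1), ((1+k : ℕ):ℝ) * x^(k+1)) ≤ x / (1-x)^2 := by
      have heq : (∑ k ∈ Finset.range (n-1), ((1+k : ℕ):ℝ) * x^(k+1))
          = ∑ i ∈ Finset.range n, (i:ℝ) * x^i := by
        rw [← h2, Finset.sum_range_succ' (fun i => (i:ℝ) * x^i) (n-1)]
        push_cast
        rw [zero_mul, add_zero]
        exact Finset.sum_congr rfl (fun k _ => by ring)
      rw [heq]
      exact sum_le_hasSum (Finset.range n) (fun i _ => by positivity) hgeom
    have : (∑ k ∈ Finset.range (n-1), ((1+k : ℕ):ℝ)/n * x^(k+1))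
        = (∑ k ∈ Finset.range (n-1), ((1+k : ℕ):ℝ) * x^(k+1)) / n := by
      rw [Finset.sum_div]
      exact Finset.sum_congr rfl (fun k _ => by ring)
    rw [this]
    gcongr
  have hx_eq : x ^ n = (1 + ρ) ^ (-(n : ℤ)) := by
    rw [zpow_neg, zpow_natCast, ← inv_pow, hxdef]
  have hfrac : (x / (1-x)^2) / n = (1 + ρ) / (ρ ^ 2 * n) := by
    rw [hxdef]
    have h1x : 1 - (1+ρ)⁻¹ = ρ / (1+ρ) := by field_simp; ring
    rw [h1x]
    field_simp
  calc F 1 ≤ (∑ k ∈ Finset.range (n-1), ((1 + k : ℕ) : ℝ)/n * x^(k+1)) + x^n := hF1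
    _ ≤ (x / (1-x)^2) / n + x^n := by linarith
    _ = (1 + ρ) / (ρ ^ 2 * n) + (1 + ρ) ^ (-(n : ℤ)) := by rw [hfrac, hx_eq]
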